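/- Let U : ℝ → ℝ be a C² solution of -c U' = (1/2) U'' + f(U) with U(-∞)=1, U(+∞)=0, U'(±∞)=0, U' square integrable and not identically zero. If ∫_0^1 f(z) dz > 0 then c > 0, if ∫_0^1 f(z) dz < 0 then c < 0, and if ∫_0^1 f(z) dz = 0 then c = 0. -/

import Mathlib

open MeasureTheory Filter

/-- The sign of the traveling wave speed equals the sign of `∫_0^1 f`. -/
theorem traveling_wave_speed_sign
    (U f : ℝ → ℝ) (c : ℝ)
    (hU : ContDiff ℝ 2 U)
    (hf : Continuous f) (hf0 : f 0 = 0) (hf1 : f 1 = 0)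
    (heq : ∀ x, -c * deriv U x = (1/2) * deriv (deriv U) x + f (U x))
    (hUbot : Tendsto U atBot (nhds 1))
    (hUtop : Tendsto U atTop (nhds 0))
    (hU'bot : Tendsto (deriv U) atBot (nhds 0))
    (hU'top : Tendsto (deriv U) atTop (nhds 0))
    (hL2 : Integrable (fun x => (deriv U x) ^ 2))
    (hnz : ∃ x, deriv U x ≠ 0) :
    ((0 < ∫ z in (0:ℝ)..1, f z) → 0 < c) ∧
    ((∫ z in (0:ℝ)..1, f z) < 0 → c < 0) ∧
    ((∫ z in (0:ℝ)..1, f z) = 0 → c = 0) := by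
  set I : ℝ := ∫ z in (0:ℝ)..1, f z with hI
  -- U is C², so deriv U is C¹
  have hU1 : ContDiff ℝ 1 (deriv U) := by
    have h := (contDiff_succ_iff_deriv (n := 1)).mp (by exact_mod_cast hU)
    exact h.2.2
  have hUdiff : Differentiable ℝ U := hU.differentiable (by norm_num)
  have hU'diff : Differentiable ℝ (deriv U) := hU1.differentiable one_ne_zero
  have hU'cont : Continuous (deriv U) := hU1.continuous
  -- the antiderivative of f
  set F : ℝ → ℝ := fun x => ∫ t in (0:ℝ)..x, f t with hF
  have hFderiv : ∀ x, HasDerivAt F (f x) x := fun x =>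
    intervalIntegral.integral_hasDerivAt_right (hf.intervalIntegrable 0 x)
      (hf.stronglyMeasurableAtFilter _ _) hf.continuousAt
  -- the energy function
  set G : ℝ → ℝ := fun x => (1/4) * (deriv U x)^2 + F (U x) with hG
  have hGderiv : ∀ x, HasDerivAt G (-c * (deriv U x)^2) x := by
    intro x
    have h1 : HasDerivAt U (deriv U x) x := (hUdiff x).hasDerivAt
    have h2 : HasDerivAt (deriv U) (deriv (deriv U) x) x := (hU'diff x).hasDerivAt
    have h3 := (h2.pow 2).const_mul (1/4)
    have h4 : HasDerivAt (fun y => F (U y)) (f (U x) * deriv U x) x :=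
      (hFderiv (U x)).comp x h1
    have h5 := h3.add h4
    refine h5.congr_deriv ?_
    have h6 := heq x
    push_cast
    linear_combination (-deriv U x) * h6
  -- limits of G at ±∞
  have hFcont : Continuous F := by
    apply continuous_iff_continuousAt.mpr
    exact fun x => (hFderiv x).continuousAt
  have hF0 : F 0 = 0 := by simp [hF]
  have hF1 : F 1 = I := rfl
  have hGtop : Tendsto G atTop (nhds 0) := by
    have h1 : Tendsto (fun x => (1/4) * (deriv U x)^2) atTop (nhds ((1/4) * 0^2)) :=
      (hU'top.pow 2).const_mul (1/4)
    have h2 : Tendsto (fun x => F (U x)) atTop (nhds (F 0)) :=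
      (hFcont.continuousAt.tendsto).comp hUtop
    have := h1.add h2
    simpa [hG, hF0, one_div] using this
  have hGbot : Tendsto G atBot (nhds I) := by
    have h1 : Tendsto (fun x => (1/4) * (deriv U x)^2) atBot (nhds ((1/4) * 0^2)) :=
      (hU'bot.pow 2).const_mul (1/4)
    have h2 : Tendsto (fun x => F (U x)) atBot (nhds (F 1)) :=
      (hFcont.continuousAt.tendsto).comp hUbot
    have := h1.add h2
    simpa [hG, hF1, one_div] using this
  -- integrability of G'
  have hint : Integrable (fun x => -c * (deriv U x)^2) := hL2.const_mul (-c)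
  -- FTC on (-∞, 0] and [0, ∞)
  have hIic : ∫ x in Set.Iic (0:ℝ), -c * (deriv U x)^2 = G 0 - I :=
    integral_Iic_of_hasDerivAt_of_tendsto' (fun x _ => hGderiv x)
      hint.integrableOn hGbot
  have hIoi : ∫ x in Set.Ioi (0:ℝ), -c * (deriv U x)^2 = 0 - G 0 :=
    integral_Ioi_of_hasDerivAt_of_tendsto' (fun x _ => hGderiv x)
      hint.integrableOn hGtop
  have htotal : ∫ x, -c * (deriv U x)^2 = -I := by
    rw [← intervalIntegral.integral_Iic_add_Ioi (b := (0:ℝ)) hint.integrableOn hint.integrableOn,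
      hIic, hIoi]
    ring
  set J : ℝ := ∫ x, (deriv U x)^2 with hJ
  have hkey : c * J = I := by
    have : -c * J = -I := by
      rw [hJ, ← integral_const_mul]
      exact htotal
    linarith
  -- J > 0
  have hJpos : 0 < J := by
    rw [hJ, integral_pos_iff_support_of_nonneg (fun x => sq_nonneg _) hL2]
    obtain ⟨x₀, hx₀⟩ := hnz
    have hopen : IsOpen (Function.support fun x => (deriv U x)^2) :=
      (hU'cont.pow 2).isOpen_preimage {0}ᶜ isOpen_compl_singleton
    · exact hopen.measure_pos volume ⟨x₀, by simp [Function.mem_support, pow_eq_zero_iff, hx₀]⟩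
  refine ⟨fun h => ?_, fun h => ?_, fun h => ?_⟩
  · nlinarith
  · nlinarith
  · nlinarith
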